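/- Let ν be a Borel measure on ℝ such that ν([-z,z]^c) ≤ C e^{−λz} for all z ≥ 1, where C, λ > 0. Then there exists a constant C' > 0 such that for all α with 0 < α ≤ (1 ∧ λ)/2, ∫_{[-1,1]^c} (exp(αz) − αz − 1) ν(dz) ≤ C' α². -/

import Mathlib

open MeasureTheory Real

lemma my_exp_sub_bound (x : ℝ) : Real.exp x - x - 1 ≤ x ^ 2 * Real.exp |x| := by
  have h0 : Real.exp x * (1 - x) ≤ 1 := by
    have h := mul_le_mul_of_nonneg_left (Real.add_one_le_exp (-x)) (Real.exp_pos x).le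
    rw [← Real.exp_add, add_neg_cancel, Real.exp_zero] at h
    nlinarith
  have h1 : Real.exp x - x - 1 ≤ x * (Real.exp x - 1) := by nlinarith
  have h2 : |Real.exp x - 1| ≤ |x| * Real.exp |x| := by
    rcases le_or_gt 0 x with hx | hx
    · rw [abs_of_nonneg (by nlinarith [Real.add_one_le_exp x] : (0:ℝ) ≤ Real.exp x - 1),
        abs_of_nonneg hx]
      nlinarith
    · rw [abs_of_neg hx, abs_of_nonpos (by nlinarith [Real.exp_lt_one_iff.mpr hx] : Real.exp x - 1 ≤ 0)]
      have := Real.add_one_le_exp x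
      nlinarith [Real.one_le_exp (by linarith : (0:ℝ) ≤ -x)]
  calc Real.exp x - x - 1 ≤ x * (Real.exp x - 1) := h1
    _ ≤ |x * (Real.exp x - 1)| := le_abs_self _
    _ = |x| * |Real.exp x - 1| := abs_mul _ _
    _ ≤ |x| * (|x| * Real.exp |x|) := by
        exact mul_le_mul_of_nonneg_left h2 (abs_nonneg x)
    _ = x ^ 2 * Real.exp |x| := by rw [← sq_abs]; ring

lemma my_sq_le (lam t : ℝ) (hlam : 0 < lam) (ht : 0 ≤ t) :
    t ^ 2 ≤ (8 / lam) ^ 2 * Real.exp (lam / 4 * t) := by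
  have h : lam / 8 * t ≤ Real.exp (lam / 8 * t) := by
    nlinarith [Real.add_one_le_exp (lam / 8 * t)]
  have ht' : t ≤ 8 / lam * Real.exp (lam / 8 * t) := by
    have h2 := mul_le_mul_of_nonneg_left h (by positivity : (0:ℝ) ≤ 8 / lam)
    calc t = 8 / lam * (lam / 8 * t) := by field_simp
      _ ≤ _ := h2
  calc t ^ 2 ≤ (8 / lam * Real.exp (lam / 8 * t)) ^ 2 := by
        exact pow_le_pow_left₀ ht ht' 2
    _ = (8 / lam) ^ 2 * (Real.exp (lam / 8 * t)) ^ 2 := by ring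
    _ = (8 / lam) ^ 2 * Real.exp (lam / 4 * t) := by
        rw [← Real.exp_nat_mul]
        congr 1
        push_cast
        ring
open MeasureTheory Real

lemma my_fin (ν : Measure ℝ) (C lam : ℝ) (hC : 0 < C) (hlam : 0 < lam)
    (htail : ∀ z : ℝ, 1 ≤ z → ν {x : ℝ | z < |x|} ≤ ENNReal.ofReal (C * Real.exp (-lam * z))) :
    ∫⁻ z in {x : ℝ | 1 < |x|}, ENNReal.ofReal (Real.exp (3/4*lam * |z|)) ∂ν < ⊤ := by
  set A : ℕ → Set ℝ := fun n => {x : ℝ | (n:ℝ) + 1 < |x| ∧ |x| ≤ (n:ℝ) + 2} with hA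
  have hSsub : {x : ℝ | 1 < |x|} ⊆ ⋃ n, A n := by
    intro x hx
    have hx1 : (1:ℝ) < |x| := hx
    have h2 : 2 ≤ ⌈|x|⌉₊ := by
      have : (1:ℝ) < (⌈|x|⌉₊ : ℝ) := lt_of_lt_of_le hx1 (Nat.le_ceil _)
      exact_mod_cast Nat.lt_of_lt_of_le (by exact_mod_cast this) le_rfl
    refine Set.mem_iUnion.mpr ⟨⌈|x|⌉₊ - 2, ?_, ?_⟩
    · have hcast : ((⌈|x|⌉₊ - 2 : ℕ) : ℝ) = (⌈|x|⌉₊ : ℝ) - 2 := by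
        push_cast [Nat.cast_sub h2]; ring
      have hlt : (⌈|x|⌉₊ : ℝ) < |x| + 1 := Nat.ceil_lt_add_one (abs_nonneg x)
      rw [hcast]; linarith
    · have hcast : ((⌈|x|⌉₊ - 2 : ℕ) : ℝ) = (⌈|x|⌉₊ : ℝ) - 2 := by
        push_cast [Nat.cast_sub h2]; ring
      rw [hcast]
      have := Nat.le_ceil |x|
      linarith
  have step1 : ∫⁻ z in {x : ℝ | 1 < |x|}, ENNReal.ofReal (Real.exp (3/4*lam * |z|)) ∂ν
      ≤ ∑' n, ∫⁻ z in A n, ENNReal.ofReal (Real.exp (3/4*lam * |z|)) ∂ν :=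
    le_trans (lintegral_mono_set hSsub) (lintegral_iUnion_le _ _)
  have step2 : ∀ n : ℕ, ∫⁻ z in A n, ENNReal.ofReal (Real.exp (3/4*lam * |z|)) ∂ν
      ≤ ENNReal.ofReal (C * Real.exp (lam/2)) * ENNReal.ofReal (Real.exp (-(lam/4))) ^ n := by
    intro n
    have htb : ν (A n) ≤ ENNReal.ofReal (C * Real.exp (-lam * ((n:ℝ)+1))) := by
      refine le_trans (measure_mono ?_) (htail ((n:ℝ)+1) (by linarith [Nat.cast_nonneg (α := ℝ) n]))
      intro x hx
      exact hx.1
    calc ∫⁻ z in A n, ENNReal.ofReal (Real.exp (3/4*lam * |z|)) ∂ν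
        ≤ ∫⁻ _ in A n, ENNReal.ofReal (Real.exp (3/4*lam * ((n:ℝ)+2))) ∂ν := by
          refine setLIntegral_mono measurable_const ?_
          intro x hx
          exact ENNReal.ofReal_le_ofReal (Real.exp_le_exp.mpr
            (mul_le_mul_of_nonneg_left hx.2 (by positivity)))
      _ = ENNReal.ofReal (Real.exp (3/4*lam * ((n:ℝ)+2))) * ν (A n) := setLIntegral_const _ _
      _ ≤ ENNReal.ofReal (Real.exp (3/4*lam * ((n:ℝ)+2))) *
            ENNReal.ofReal (C * Real.exp (-lam * ((n:ℝ)+1))) := mul_le_mul_right htb _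
      _ = ENNReal.ofReal (C * Real.exp (lam/2)) * ENNReal.ofReal (Real.exp (-(lam/4))) ^ n := by
          rw [← ENNReal.ofReal_pow (Real.exp_pos _).le,
            ← ENNReal.ofReal_mul (Real.exp_pos _).le,
            ← ENNReal.ofReal_mul (by positivity : (0:ℝ) ≤ C * Real.exp (lam/2))]
          congr 1
          have hexp : Real.exp (3/4*lam*((n:ℝ)+2)) * Real.exp (-lam*((n:ℝ)+1))
              = Real.exp (lam/2) * Real.exp (-(lam/4)) ^ n := by
            rw [← Real.exp_nat_mul, ← Real.exp_add, ← Real.exp_add]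
            congr 1
            push_cast
            ring
          linear_combination C * hexp
  have step3 : ∑' n : ℕ, ENNReal.ofReal (C * Real.exp (lam/2)) * ENNReal.ofReal (Real.exp (-(lam/4))) ^ n
      = ENNReal.ofReal (C * Real.exp (lam/2)) * (1 - ENNReal.ofReal (Real.exp (-(lam/4))))⁻¹ := by
    rw [ENNReal.tsum_mul_left, ENNReal.tsum_geometric]
  have hr : ENNReal.ofReal (Real.exp (-(lam/4))) < 1 := by
    rw [← ENNReal.ofReal_one]
    exact ENNReal.ofReal_lt_ofReal_iff_of_nonneg (Real.exp_pos _).le |>.mpr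
      (Real.exp_lt_one_iff.mpr (by linarith))
  have hfin : ENNReal.ofReal (C * Real.exp (lam/2)) * (1 - ENNReal.ofReal (Real.exp (-(lam/4))))⁻¹ < ⊤ := by
    apply ENNReal.mul_lt_top ENNReal.ofReal_lt_top
    rw [ENNReal.inv_lt_top]
    exact tsub_pos_iff_lt.mpr hr
  calc ∫⁻ z in {x : ℝ | 1 < |x|}, ENNReal.ofReal (Real.exp (3/4*lam * |z|)) ∂ν
      ≤ ∑' n, ∫⁻ z in A n, ENNReal.ofReal (Real.exp (3/4*lam * |z|)) ∂ν := step1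
    _ ≤ ∑' n : ℕ, ENNReal.ofReal (C * Real.exp (lam/2)) * ENNReal.ofReal (Real.exp (-(lam/4))) ^ n :=
        ENNReal.tsum_le_tsum step2
    _ = _ := step3
    _ < ⊤ := hfin

theorem stmt1 (ν : Measure ℝ) [SigmaFinite ν] (C lam : ℝ) (hC : 0 < C) (hlam : 0 < lam)
    (htail : ∀ z : ℝ, 1 ≤ z → ν {x : ℝ | z < |x|} ≤ ENNReal.ofReal (C * Real.exp (-lam * z)))
    (hint : Integrable (fun z => z ^ 2) ν) :
    ∃ C' > 0, ∀ α : ℝ, 0 < α → α ≤ (min 1 lam) / 2 →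
      ∫ z in {x : ℝ | 1 < |x|}, (Real.exp (α * z) - α * z - 1) ∂ν ≤ C' * α ^ 2 := by
  have hI := my_fin ν C lam hC hlam htail
  set I : ENNReal := ∫⁻ z in {x : ℝ | 1 < |x|}, ENNReal.ofReal (Real.exp (3/4*lam * |z|)) ∂ν with hIdef
  set K : ℝ := (8 / lam) ^ 2 with hK
  have hKpos : 0 < K := by positivity
  set M : ℝ := I.toReal with hM
  have hMnn : 0 ≤ M := ENNReal.toReal_nonneg
  refine ⟨K * (M + 1), by positivity, ?_⟩
  intro α hα hα2
  have hαlam : α ≤ lam / 2 := le_trans hα2 (by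
    have : min 1 lam ≤ lam := min_le_right _ _
    linarith)
  -- pointwise bound
  have hpt : ∀ z : ℝ, Real.exp (α * z) - α * z - 1 ≤ α ^ 2 * K * Real.exp (3/4*lam * |z|) := by
    intro z
    have h1 : Real.exp (α * z) - α * z - 1 ≤ (α * z) ^ 2 * Real.exp |α * z| :=
      my_exp_sub_bound (α * z)
    have habs : |α * z| = α * |z| := by rw [abs_mul, abs_of_pos hα]
    have h2 : Real.exp |α * z| ≤ Real.exp (lam / 2 * |z|) := by
      rw [habs]
      exact Real.exp_le_exp.mpr (mul_le_mul_of_nonneg_right hαlam (abs_nonneg z))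
    have h3 : z ^ 2 ≤ K * Real.exp (lam / 4 * |z|) := by
      calc z ^ 2 = |z| ^ 2 := (sq_abs z).symm
        _ ≤ K * Real.exp (lam / 4 * |z|) := my_sq_le lam |z| hlam (abs_nonneg z)
    calc Real.exp (α * z) - α * z - 1 ≤ (α * z) ^ 2 * Real.exp |α * z| := h1
      _ ≤ (α * z) ^ 2 * Real.exp (lam / 2 * |z|) := by
          exact mul_le_mul_of_nonneg_left h2 (by positivity)
      _ = α ^ 2 * z ^ 2 * Real.exp (lam / 2 * |z|) := by ring
      _ ≤ α ^ 2 * (K * Real.exp (lam / 4 * |z|)) * Real.exp (lam / 2 * |z|) := by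
          have := mul_le_mul_of_nonneg_left h3 (sq_nonneg α)
          exact mul_le_mul_of_nonneg_right this (Real.exp_pos _).le
      _ = α ^ 2 * K * Real.exp (3/4*lam * |z|) := by
          rw [mul_assoc, mul_assoc, ← Real.exp_add, ← mul_assoc]
          congr 2
          ring
  have hnn : 0 ≤ᵐ[ν.restrict {x : ℝ | 1 < |x|}] fun z => Real.exp (α * z) - α * z - 1 := by
    filter_upwards with z
    have := Real.add_one_le_exp (α * z)
    simp only [Pi.zero_apply]
    linarith
  have hmeas : AEStronglyMeasurable (fun z => Real.exp (α * z) - α * z - 1)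
      (ν.restrict {x : ℝ | 1 < |x|}) := by
    apply Continuous.aestronglyMeasurable
    continuity
  rw [MeasureTheory.integral_eq_lintegral_of_nonneg_ae hnn hmeas]
  have hL : ∫⁻ z in {x : ℝ | 1 < |x|}, ENNReal.ofReal (Real.exp (α * z) - α * z - 1) ∂ν
      ≤ ENNReal.ofReal (α ^ 2 * K) * I := by
    rw [hIdef, ← lintegral_const_mul' _ _ ENNReal.ofReal_ne_top]
    refine lintegral_mono fun z => ?_
    rw [← ENNReal.ofReal_mul (by positivity)]
    exact ENNReal.ofReal_le_ofReal (hpt z)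
  have hItop : ENNReal.ofReal (α ^ 2 * K) * I ≠ ⊤ :=
    ENNReal.mul_ne_top ENNReal.ofReal_ne_top hI.ne
  have := ENNReal.toReal_mono hItop hL
  rw [ENNReal.toReal_mul, ENNReal.toReal_ofReal (by positivity)] at this
  calc (∫⁻ z in {x : ℝ | 1 < |x|}, ENNReal.ofReal (Real.exp (α * z) - α * z - 1) ∂ν).toReal
      ≤ α ^ 2 * K * M := this
    _ ≤ K * (M + 1) * α ^ 2 := by nlinarith
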